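/- arXiv:1709.04010 — 2 statements merged into one kernel-verified Lean document; each statement's English description precedes it below -/
import Mathlib

section
/- Let B_r(z₁,z₂) = (rz₁, rz₁) for 0 < r ≤ 1. The composition operator C_{B_r} is bounded on H²(𝔻²) for every r ∈ (0,1) but unbounded for r = 1. -/
open Complex ComplexOrder

noncomputable section

/-- The open bidisk `𝔻² ⊆ ℂ²`. -/
def bidisk : Set (ℂ × ℂ) := {z | ‖z.1‖ < 1 ∧ ‖z.2‖ < 1}

/-- A positive kernel on the bidisk: self-adjoint on `𝔻²×𝔻²` and all finite
Gram-type matrices built from points of `𝔻²` are positive semi-definite. -/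
def IsPosKernelBidisk (K : ℂ × ℂ → ℂ × ℂ → ℂ) : Prop :=
  (∀ z ∈ bidisk, ∀ w ∈ bidisk, K z w = starRingEnd ℂ (K w z)) ∧
  ∀ (m : ℕ) (l : Fin m → ℂ × ℂ), (∀ i, l i ∈ bidisk) → ∀ c : Fin m → ℂ,
    0 ≤ ∑ i : Fin m, ∑ j : Fin m, c i * starRingEnd ℂ (c j) * K (l i) (l j)

/-- `a` is the coefficient (power series) representation of `f` on the bidisk;
`f ∈ H²(𝔻²)` with `‖f‖² = Σ |a|²` when moreover `Σ |a|² < ∞`. -/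
def IsHardyRep (f : ℂ × ℂ → ℂ) (a : ℕ × ℕ → ℂ) : Prop :=
  ∀ z ∈ bidisk, HasSum (fun k : ℕ × ℕ => a k * z.1 ^ k.1 * z.2 ^ k.2) (f z)

/-- The two-variable analytic polynomial with coefficients `a`. -/
def poly (a : ℕ × ℕ →₀ ℂ) (z : ℂ × ℂ) : ℂ :=
  a.sum fun k c => c * z.1 ^ k.1 * z.2 ^ k.2

/-- If a power series with uniformly bounded coefficients sums to `0` everywhere
on the unit disk, then all its coefficients vanish. -/
lemma coeff_eq_zero_of_hasSum_zero (c : ℕ → ℂ) (M : ℝ) (hM : ∀ m, ‖c m‖ ≤ M)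
    (h : ∀ w : ℂ, ‖w‖ < 1 → HasSum (fun m => c m * w ^ m) 0) : ∀ m, c m = 0 := by
  have hM0 : 0 ≤ M := le_trans (norm_nonneg _) (hM 0)
  intro m
  induction m using Nat.strong_induction_on with
  | _ m ih =>
  have key : ∀ t : ℝ, 0 < t → t < 1/2 → ‖c m‖ ≤ 2 * M * t := by
    intro t ht ht2
    have hw : ‖(t : ℂ)‖ < 1 := by
      rw [Complex.norm_real, Real.norm_eq_abs, abs_of_pos ht]; linarith
    have hw0 : (t : ℂ) ≠ 0 := by exact_mod_cast ht.ne'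
    have h0 := h (t : ℂ) hw
    have h1 : HasSum (fun k => c (k + m) * (t : ℂ) ^ (k + m)) 0 := by
      rw [hasSum_nat_add_iff (f := fun i => c i * (t : ℂ) ^ i) m]
      have : ∑ i ∈ Finset.range m, c i * (t : ℂ) ^ i = 0 :=
        Finset.sum_eq_zero fun i hi => by rw [ih i (Finset.mem_range.mp hi), zero_mul]
      rw [this, zero_add]; exact h0
    have h2 : HasSum (fun k => c (k + m) * (t : ℂ) ^ k) 0 := by
      rw [← hasSum_mul_left_iff (pow_ne_zero m hw0) (a₁ := (0:ℂ)), mul_zero]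
      convert h1 using 2 with k
      · rfl
      ring
    have h3 : HasSum (fun k => c (k + 1 + m) * (t : ℂ) ^ (k + 1)) (-(c m)) := by
      rw [hasSum_nat_add_iff (f := fun k => c (k + m) * (t : ℂ) ^ k) 1]
      simpa using h2
    have hsummable : Summable (fun k : ℕ => M * t ^ (k + 1)) := by
      apply Summable.mul_left
      exact (summable_geometric_of_lt_one ht.le (by linarith)).comp_injective
        (add_left_injective 1)
    have hnorm_summable : Summable (fun k : ℕ => ‖c (k + 1 + m) * (t : ℂ) ^ (k + 1)‖) := by
      apply Summable.of_nonneg_of_le (fun k => norm_nonneg _) _ hsummable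
      intro k
      rw [norm_mul, norm_pow, Complex.norm_real, Real.norm_eq_abs, abs_of_pos ht]
      exact mul_le_mul_of_nonneg_right (hM _) (by positivity)
    have : ‖c m‖ ≤ ∑' k : ℕ, M * t ^ (k + 1) := by
      rw [← norm_neg, ← h3.tsum_eq]
      exact le_trans (norm_tsum_le_tsum_norm hnorm_summable)
        (Summable.tsum_le_tsum (fun k => by
          rw [norm_mul, norm_pow, Complex.norm_real, Real.norm_eq_abs, abs_of_pos ht]
          exact mul_le_mul_of_nonneg_right (hM _) (by positivity)) hnorm_summable hsummable)
    have htsum : ∑' k : ℕ, M * t ^ (k + 1) = M * t * (1 - t)⁻¹ := by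
      have : ∀ k : ℕ, M * t ^ (k + 1) = (M * t) * t ^ k := fun k => by ring
      rw [tsum_congr this, tsum_mul_left, tsum_geometric_of_lt_one ht.le (by linarith)]
    rw [htsum] at this
    refine le_trans this ?_
    have h12 : (1 - t)⁻¹ ≤ 2 := by
      rw [inv_le_comm₀ (by linarith) (by norm_num)]; linarith
    calc M * t * (1 - t)⁻¹ ≤ M * t * 2 :=
          mul_le_mul_of_nonneg_left h12 (by positivity)
      _ = 2 * M * t := by ring
  have : ‖c m‖ ≤ 0 := by
    refine le_of_forall_pos_le_add fun ε hε => ?_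
    have ht : (0:ℝ) < min (1/4) (ε / (2 * M + 1)) := by positivity
    have := key _ ht (lt_of_le_of_lt (min_le_left _ _) (by norm_num))
    refine le_trans this ?_
    rw [zero_add]
    calc 2 * M * min (1/4) (ε / (2 * M + 1)) ≤ (2 * M + 1) * (ε / (2 * M + 1)) := by
          apply mul_le_mul (by linarith) (min_le_right _ _) (le_of_lt ht) (by linarith)
      _ = ε := by field_simp
  simpa using le_antisymm this (norm_nonneg _)

private lemma part1 : ∀ r : ℝ, 0 < r → r < 1 → ∃ C : ℝ, 0 < C ∧ ∀ a : ℕ × ℕ →₀ ℂ,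
    ∃ b : ℕ × ℕ → ℂ, Summable (fun k => ‖b k‖ ^ 2) ∧
      IsHardyRep (fun z => poly a (r * z.1, r * z.1)) b ∧
      ∑' k, ‖b k‖ ^ 2 ≤ C ^ 2 * ∑ k ∈ a.support, ‖a k‖ ^ 2 := by
  intro r hr0 hr1
  have hx0 : (0:ℝ) ≤ r ^ 2 := by positivity
  have hx1 : r ^ 2 < 1 := by nlinarith
  set C : ℝ := (1 - r ^ 2)⁻¹ with hC
  have hCpos : 0 < C := by rw [hC]; exact inv_pos.mpr (by nlinarith)
  have hC1 : 1 ≤ C := by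
    rw [hC]
    exact one_le_inv_iff₀.mpr ⟨by nlinarith, by nlinarith [sq_nonneg r]⟩
  -- key: (m+1) * (r^2)^m ≤ C
  have hkey : ∀ m : ℕ, (m + 1 : ℝ) * (r ^ 2) ^ m ≤ C := by
    intro m
    have h1 : (m + 1 : ℝ) * (r ^ 2) ^ m = ∑ j ∈ Finset.range (m + 1), (r ^ 2) ^ m := by
      rw [Finset.sum_const, Finset.card_range, nsmul_eq_mul]; push_cast; ring
    have h2 : ∑ j ∈ Finset.range (m + 1), (r ^ 2) ^ m
        ≤ ∑ j ∈ Finset.range (m + 1), (r ^ 2) ^ j := by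
      apply Finset.sum_le_sum
      intro j hj
      exact pow_le_pow_of_le_one hx0 hx1.le (Nat.lt_succ_iff.mp (Finset.mem_range.mp hj))
    have h3 : ∑ j ∈ Finset.range (m + 1), (r ^ 2) ^ j ≤ ∑' j : ℕ, (r ^ 2) ^ j :=
      Summable.sum_le_tsum _ (fun j _ => by positivity) (summable_geometric_of_lt_one hx0 hx1)
    rw [tsum_geometric_of_lt_one hx0 hx1] at h3
    linarith [h1 ▸ le_trans h2 h3]
  refine ⟨C, hCpos, fun a => ?_⟩
  classical
  set S : Finset (ℕ × ℕ) := a.support.image (fun j => (j.1 + j.2, 0)) with hS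
  set b : ℕ × ℕ → ℂ := fun k =>
    ∑ j ∈ a.support with ((j.1 + j.2 : ℕ), (0:ℕ)) = k, (r : ℂ) ^ (j.1 + j.2) * a j with hb
  have hb0 : ∀ k ∉ S, b k = 0 := by
    intro k hk
    rw [hb]
    apply Finset.sum_eq_zero
    intro j hj
    rw [Finset.mem_filter] at hj
    exact absurd (hj.2 ▸ Finset.mem_image_of_mem _ hj.1) hk
  -- fiber sum of |a|^2
  set F : ℕ × ℕ → ℝ := fun k =>
    ∑ j ∈ a.support with ((j.1 + j.2 : ℕ), (0:ℕ)) = k, ‖a j‖ ^ 2 with hF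
  have hFnonneg : ∀ k, 0 ≤ F k := fun k => Finset.sum_nonneg fun j _ => by positivity
  -- pointwise bound
  have hpt : ∀ k : ℕ × ℕ, ‖b k‖ ^ 2 ≤ C * F k := by
    intro k
    set T := a.support.filter (fun j => ((j.1 + j.2 : ℕ), (0:ℕ)) = k) with hT
    have hdeg : ∀ j ∈ T, j.1 + j.2 = k.1 := by
      intro j hj
      rw [hT, Finset.mem_filter] at hj
      exact congrArg Prod.fst hj.2
    have hcard : (T.card : ℝ) ≤ (k.1 + 1 : ℝ) := by
      have : T.card ≤ k.1 + 1 := by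
        have : T.card ≤ (Finset.range (k.1 + 1)).card := by
          apply Finset.card_le_card_of_injOn (fun j => j.1)
          · intro j hj
            simp only [Finset.mem_range]
            rw [Finset.mem_coe, Finset.mem_range]
            have := hdeg j hj; omega
          · intro x hx y hy hxy
            have hx' := hdeg x hx; have hy' := hdeg y hy
            have hxy' : x.1 = y.1 := hxy
            exact Prod.ext hxy' (by omega)
        simpa using this
      exact_mod_cast this
    have h1 : ‖b k‖ ≤ ∑ j ∈ T, ‖(r : ℂ) ^ (j.1 + j.2) * a j‖ := norm_sum_le _ _
    have h2 : ‖b k‖ ^ 2 ≤ (∑ j ∈ T, ‖(r : ℂ) ^ (j.1 + j.2) * a j‖) ^ 2 :=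
      pow_le_pow_left₀ (norm_nonneg _) h1 2
    have h3 : (∑ j ∈ T, ‖(r : ℂ) ^ (j.1 + j.2) * a j‖) ^ 2
        ≤ T.card * ∑ j ∈ T, ‖(r : ℂ) ^ (j.1 + j.2) * a j‖ ^ 2 :=
      sq_sum_le_card_mul_sum_sq
    have h4 : ∑ j ∈ T, ‖(r : ℂ) ^ (j.1 + j.2) * a j‖ ^ 2 = (r ^ 2) ^ k.1 * F k := by
      rw [hF, Finset.mul_sum]
      apply Finset.sum_congr rfl
      intro j hj
      rw [norm_mul, norm_pow, Complex.norm_real, Real.norm_eq_abs, abs_of_pos hr0,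
        mul_pow, ← pow_mul, ← pow_mul, hdeg j hj]
      ring
    have h5 : (T.card : ℝ) * ((r ^ 2) ^ k.1 * F k) ≤ (k.1 + 1 : ℝ) * (r ^ 2) ^ k.1 * F k := by
      have h6 : (0:ℝ) ≤ (r ^ 2) ^ k.1 * F k := mul_nonneg (by positivity) (hFnonneg k)
      calc (T.card : ℝ) * ((r ^ 2) ^ k.1 * F k) ≤ (k.1 + 1 : ℝ) * ((r ^ 2) ^ k.1 * F k) :=
            mul_le_mul_of_nonneg_right hcard h6
        _ = (k.1 + 1 : ℝ) * (r ^ 2) ^ k.1 * F k := by ring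
    have h7 : (k.1 + 1 : ℝ) * (r ^ 2) ^ k.1 * F k ≤ C * F k :=
      mul_le_mul_of_nonneg_right (hkey k.1) (hFnonneg k)
    calc ‖b k‖ ^ 2 ≤ (T.card : ℝ) * ∑ j ∈ T, ‖(r : ℂ) ^ (j.1 + j.2) * a j‖ ^ 2 :=
          le_trans h2 h3
      _ = (T.card : ℝ) * ((r ^ 2) ^ k.1 * F k) := by rw [h4]
      _ ≤ C * F k := le_trans h5 h7
  refine ⟨b, summable_of_ne_finset_zero (s := S)
    (fun k hk => by show ‖b k‖ ^ 2 = 0; rw [hb0 k hk]; simp), ?_, ?_⟩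
  · -- Hardy rep
    intro z hz
    have heq : ∀ i ∈ a.support, (fun k => b k * z.1 ^ k.1 * z.2 ^ k.2) ((i.1 + i.2, 0) : ℕ × ℕ)
        = ∑ j ∈ a.support with ((j.1 + j.2 : ℕ), (0:ℕ)) = ((i.1 + i.2 : ℕ), (0:ℕ)),
            a j * ((r : ℂ) * z.1) ^ j.1 * ((r : ℂ) * z.1) ^ j.2 := by
      intro i hi
      show (∑ j ∈ a.support with ((j.1 + j.2 : ℕ), (0:ℕ)) = ((i.1 + i.2 : ℕ), (0:ℕ)),
        (r : ℂ) ^ (j.1 + j.2) * a j) * z.1 ^ (i.1 + i.2) * z.2 ^ 0 = _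
      rw [pow_zero, mul_one, Finset.sum_mul]
      apply Finset.sum_congr rfl
      intro j hj
      rw [Finset.mem_filter] at hj
      have hdj : j.1 + j.2 = i.1 + i.2 := congrArg Prod.fst hj.2
      rw [mul_pow, mul_pow, ← hdj]
      ring
    have hval : ∑ k ∈ S, b k * z.1 ^ k.1 * z.2 ^ k.2 = poly a ((r : ℂ) * z.1, (r : ℂ) * z.1) := by
      rw [hS, Finset.sum_image' _ heq]
      rfl
    show HasSum (fun k => b k * z.1 ^ k.1 * z.2 ^ k.2) (poly a ((r : ℂ) * z.1, (r : ℂ) * z.1))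
    rw [← hval]
    exact hasSum_sum_of_ne_finset_zero (fun k hk => by rw [hb0 k hk]; ring)
  · -- norm bound
    rw [tsum_eq_sum (f := fun k => ‖b k‖ ^ 2)
      (fun k hk => by show ‖b k‖ ^ 2 = 0; rw [hb0 k hk]; simp)]
    have hsum : ∑ k ∈ S, C * F k = C * ∑ j ∈ a.support, ‖a j‖ ^ 2 := by
      have h := Finset.sum_image' (s := a.support)
        (g := fun j : ℕ × ℕ => ((j.1 + j.2 : ℕ), (0:ℕ)))
        (f := fun k => C * F k) (fun j => C * ‖a j‖ ^ 2)
        (fun i hi => Finset.mul_sum _ _ _)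
      rw [hS]
      exact h.trans (Finset.mul_sum _ _ _).symm
    calc ∑ k ∈ S, ‖b k‖ ^ 2 ≤ ∑ k ∈ S, C * F k := Finset.sum_le_sum fun k _ => hpt k
      _ = C * ∑ j ∈ a.support, ‖a j‖ ^ 2 := hsum
      _ ≤ C ^ 2 * ∑ j ∈ a.support, ‖a j‖ ^ 2 := by
          apply mul_le_mul_of_nonneg_right _ (Finset.sum_nonneg fun j _ => by positivity)
          nlinarith

private lemma part2 : ¬ (∃ C : ℝ, ∀ a : ℕ × ℕ →₀ ℂ,
    ∃ b : ℕ × ℕ → ℂ, Summable (fun k => ‖b k‖ ^ 2) ∧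
      IsHardyRep (fun z => poly a (z.1, z.1)) b ∧
      ∑' k, ‖b k‖ ^ 2 ≤ C ^ 2 * ∑ k ∈ a.support, ‖a k‖ ^ 2) := by
  classical
  rintro ⟨C, hC⟩
  set n : ℕ := ⌈C ^ 2⌉₊ with hn
  set S : Finset (ℕ × ℕ) := (Finset.range (n + 1)).image (fun k => (k, n - k)) with hSdef
  have hmemS : ∀ j ∈ S, j.1 + j.2 = n ∧ j.1 ≤ n := by
    intro j hj
    rw [hSdef, Finset.mem_image] at hj
    obtain ⟨k, hk, rfl⟩ := hj
    rw [Finset.mem_range] at hk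
    constructor <;> omega
  have hcard : S.card = n + 1 := by
    rw [hSdef, Finset.card_image_of_injOn (fun x _ y _ h => congrArg Prod.fst h),
      Finset.card_range]
  set a : ℕ × ℕ →₀ ℂ := ⟨S, fun j => if j ∈ S then 1 else 0, by
    intro j; constructor
    · intro hj; simp [hj]
    · intro hj; by_contra h; simp [h] at hj⟩ with ha
  have hasupp : a.support = S := rfl
  have haval : ∀ j, a j = if j ∈ S then 1 else 0 := fun j => rfl
  have hnormsum : ∑ k ∈ a.support, ‖a k‖ ^ 2 = (n + 1 : ℝ) := by
    have h1 : ∀ j ∈ S, ‖a j‖ ^ 2 = 1 := fun j hj => by rw [haval j, if_pos hj]; norm_num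
    rw [hasupp, Finset.sum_congr rfl h1, Finset.sum_const, hcard, nsmul_eq_mul, mul_one]
    push_cast; ring
  have hpoly : ∀ w : ℂ, poly a (w, w) = ((n : ℂ) + 1) * w ^ n := by
    intro w
    show ∑ j ∈ a.support, a j * w ^ j.1 * w ^ j.2 = _
    have h1 : ∀ j ∈ S, a j * w ^ j.1 * w ^ j.2 = w ^ n := fun j hj => by
      rw [haval j, if_pos hj, one_mul, ← pow_add, (hmemS j hj).1]
    rw [hasupp, Finset.sum_congr rfl h1, Finset.sum_const, hcard, nsmul_eq_mul]
    push_cast; ring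
  obtain ⟨b, hsum, hrep, hbd⟩ := hC a
  -- restrict to one variable
  have hr : ∀ w : ℂ, ‖w‖ < 1 → HasSum (fun m : ℕ => b (m, 0) * w ^ m) (((n : ℂ) + 1) * w ^ n) := by
    intro w hw
    have h0 := hrep (w, 0) ⟨hw, by norm_num [bidisk]⟩
    simp only at h0
    rw [hpoly w] at h0
    have hinj : Function.Injective (fun m : ℕ => ((m, 0) : ℕ × ℕ)) :=
      fun x y h => congrArg Prod.fst h
    rw [← hinj.hasSum_iff (f := fun k : ℕ × ℕ => b k * w ^ k.1 * (0:ℂ) ^ k.2)] at h0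
    · convert h0 using 2 with m
      simp
    · intro k hk
      have hk2 : k.2 ≠ 0 := by
        intro h
        exact hk ⟨k.1, by rw [← h]⟩
      simp [zero_pow hk2]
  -- coefficient extraction
  set T : ℝ := ∑' k, ‖b k‖ ^ 2 with hT
  have hTnonneg : 0 ≤ T := tsum_nonneg fun k => by positivity
  have hble : ∀ k, ‖b k‖ ≤ Real.sqrt T := by
    intro k
    rw [show T = T from rfl] at *
    have h1 : ‖b k‖ ^ 2 ≤ T := Summable.le_tsum hsum k fun j _ => by positivity
    exact (Real.le_sqrt (norm_nonneg _) hTnonneg).mpr h1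
  set c : ℕ → ℂ := fun m => b (m, 0) - if m = n then ((n : ℂ) + 1) else 0 with hc
  have hcM : ∀ m, ‖c m‖ ≤ Real.sqrt T + (n + 1 : ℝ) := by
    intro m
    rw [hc]
    refine le_trans (norm_sub_le _ _) (add_le_add (hble _) ?_)
    split
    · rw [show ((n:ℂ) + 1) = ((n + 1 : ℝ) : ℂ) by push_cast; ring, Complex.norm_real,
        Real.norm_eq_abs, abs_of_pos (by positivity)]
    · simp; positivity
  have hczero : ∀ m, c m = 0 := by
    apply coeff_eq_zero_of_hasSum_zero _ _ hcM
    intro w hw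
    have h1 := hr w hw
    have h2 : HasSum (fun m : ℕ => (if m = n then ((n : ℂ) + 1) else 0) * w ^ m)
        (((n : ℂ) + 1) * w ^ n) := by
      have := hasSum_ite_eq n (((n : ℂ) + 1) * w ^ n)
      convert this using 2 with m
      split
      · rename_i h; rw [h]
      · rw [zero_mul]
    have h3 := h1.sub h2
    rw [sub_self] at h3
    convert h3 using 2 with m
    · rfl
    rw [hc]; ring
  have hbn : b (n, 0) = (n : ℂ) + 1 := by
    have := hczero n
    rw [hc] at this
    simp at this
    simpa [sub_eq_zero] using this
  -- the contradiction
  have h1 : ((n : ℝ) + 1) ^ 2 ≤ T := by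
    have := Summable.le_tsum hsum (n, 0) fun j _ => by positivity
    rw [hbn] at this
    calc ((n : ℝ) + 1) ^ 2 = ‖((n : ℂ) + 1)‖ ^ 2 := by
          rw [show ((n:ℂ) + 1) = ((n + 1 : ℝ) : ℂ) by push_cast; ring, Complex.norm_real,
            Real.norm_eq_abs, abs_of_pos (by positivity)]
      _ ≤ T := this
  have h2 : T ≤ C ^ 2 * (n + 1 : ℝ) := by rw [← hnormsum]; exact hbd
  have h3 : C ^ 2 ≤ (n : ℝ) := Nat.le_ceil _
  nlinarith [Nat.cast_nonneg (α := ℝ) n]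

/-- For `B_r(z₁,z₂) = (rz₁, rz₁)`, the composition operator `C_{B_r}` (defined on the
analytic polynomials) is bounded on `H²(𝔻²)` for every `0 < r < 1`, but unbounded
for `r = 1`. -/
theorem composition_Br_bounded_iff :
    (∀ r : ℝ, 0 < r → r < 1 → ∃ C : ℝ, 0 < C ∧ ∀ a : ℕ × ℕ →₀ ℂ,
      ∃ b : ℕ × ℕ → ℂ, Summable (fun k => ‖b k‖ ^ 2) ∧
        IsHardyRep (fun z => poly a (r * z.1, r * z.1)) b ∧
        ∑' k, ‖b k‖ ^ 2 ≤ C ^ 2 * ∑ k ∈ a.support, ‖a k‖ ^ 2) ∧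
    ¬ (∃ C : ℝ, ∀ a : ℕ × ℕ →₀ ℂ,
      ∃ b : ℕ × ℕ → ℂ, Summable (fun k => ‖b k‖ ^ 2) ∧
        IsHardyRep (fun z => poly a (z.1, z.1)) b ∧
        ∑' k, ‖b k‖ ^ 2 ≤ C ^ 2 * ∑ k ∈ a.support, ‖a k‖ ^ 2) := by
  exact ⟨part1, part2⟩
end
end

section
/- Let a(z) = (z₁−z₂)/2 on the bidisk. A function f ∈ H²(𝔻²) belongs to M(ā) = T_{ā}H²(𝔻²) if and only if there exist f₁, f₂ ∈ H²(𝔻) and f₃ ∈ H²(𝔻²) such that f(z) = f₁(z₁) + f₂(z₂) + (z₁−z₂)f₃(z). -/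
open MeasureTheory Complex Filter

noncomputable section

abbrev 𝕋 := AddCircle (1:ℝ)
abbrev T2 := 𝕋 × 𝕋
abbrev L2 := Lp ℂ 2 (volume : Measure T2)

/-- the character z₁^m z₂^n on the torus -/
def char (m n : ℤ) : C(T2, ℂ) :=
  ⟨fun p => fourier m p.1 * fourier n p.2, by fun_prop⟩

def charLp (m n : ℤ) : L2 := ContinuousMap.toLp 2 volume ℂ (char m n)

/-- Hardy space of the bidisk: closure of analytic polynomials in L²(𝕋²). -/
def H2 : Submodule ℂ L2 :=
  (Submodule.span ℂ {f | ∃ m n : ℕ, f = charLp m n}).topologicalClosure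

instance : CompleteSpace H2 := by
  have : IsClosed (H2 : Set L2) := Submodule.isClosed_topologicalClosure _
  exact this.completeSpace_coe

def P : L2 →L[ℂ] H2 := H2.orthogonalProjectionOnto

/-- Toeplitz operator with (essentially bounded) symbol φ. -/
def Toep (φ : T2 → ℂ) (hφ : MemLp φ ⊤ volume) (h : L2) : L2 :=
  (P (MemLp.toLp (φ • (h : T2 → ℂ)) ((Lp.memLp h).smul hφ)) : L2)

/-- Hankel operator with symbol φ. -/
def Hank (φ : T2 → ℂ) (hφ : MemLp φ ⊤ volume) (h : L2) : L2 :=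
  MemLp.toLp (φ • (h : T2 → ℂ)) ((Lp.memLp h).smul hφ)
    - Toep φ hφ h

lemma MeasureTheory.MemLp.conj' {f : T2 → ℂ} (hf : MemLp f ⊤ volume) :
    MemLp (fun p => starRingEnd ℂ (f p)) ⊤ volume := by
  constructor
  · exact RCLike.continuous_conj.comp_aestronglyMeasurable hf.1
  · have : eLpNorm (fun p => starRingEnd ℂ (f p)) ⊤ volume = eLpNorm f ⊤ volume := by
      apply eLpNorm_congr_norm_ae; filter_upwards with x; simp
    rw [this]; exact hf.2

/-- Fourier coefficients of an element of `L²(𝕋²)`. -/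
def fourierCoeff2 (f : L2) (m n : ℤ) : ℂ :=
  ∫ p : T2, starRingEnd ℂ (char m n p) * f p ∂volume

lemma symb_mem (c : ℤ × ℤ →₀ ℂ) :
    MemLp (fun p : T2 => c.sum fun k v => v * char k.1 k.2 p) ⊤ volume := by
  apply memLp_top_of_bound (Continuous.aestronglyMeasurable (by
    simp only [Finsupp.sum]
    exact continuous_finset_sum _ fun k _ =>
      continuous_const.mul (map_continuous (char k.1 k.2)))) (c.sum fun _ v => ‖v‖)
  filter_upwards with p
  refine (norm_sum_le _ _).trans ?_
  refine Finset.sum_le_sum fun k _ => ?_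
  have h1 : ‖char k.1 k.2 p‖ = 1 := by simp [char, fourier, Circle.norm_coe]
  simp [h1]

lemma a19_mem : MemLp (fun p : T2 => (char 1 0 p - char 0 1 p) / 2) ⊤ volume := by
  apply memLp_top_of_bound (Continuous.aestronglyMeasurable
    (((map_continuous (char 1 0)).sub (map_continuous (char 0 1))).div_const 2)) 1
  filter_upwards with p
  have h1 : ‖char 1 0 p‖ = 1 := by simp [char, fourier, Circle.norm_coe]
  have h2 : ‖char 0 1 p‖ = 1 := by simp [char, fourier, Circle.norm_coe]
  calc ‖(char 1 0 p - char 0 1 p) / 2‖ = ‖char 1 0 p - char 0 1 p‖ / 2 := by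
        rw [norm_div]; norm_num
    _ ≤ (‖char 1 0 p‖ + ‖char 0 1 p‖) / 2 := by gcongr; exact norm_sub_le _ _
    _ = 1 := by rw [h1, h2]; norm_num

open scoped InnerProductSpace ComplexConjugate
open Submodule

lemma char_apply (m n : ℤ) (p : T2) : char m n p = fourier m p.1 * fourier n p.2 := rfl

lemma norm_char (m n : ℤ) (p : T2) : ‖char m n p‖ = 1 := by simp [char_apply, Circle.norm_coe]

lemma char_mul (a b c d : ℤ) (p : T2) :
    char a b p * char c d p = char (a+c) (b+d) p := by
  simp only [char_apply, fourier_add]; ring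

lemma conj_char (a b : ℤ) (p : T2) :
    conj (char a b p) = char (-a) (-b) p := by
  simp only [char_apply, ← fourier_neg, map_mul]

lemma integral_fourier1 (n : ℤ) :
    ∫ x : 𝕋, fourier n x ∂volume = if n = 0 then 1 else 0 := by
  split_ifs with h
  · subst h
    simp only [fourier_zero, integral_const]
    simp [Measure.real, AddCircle.measure_univ]
  · exact integral_eq_zero_of_add_right_eq_neg (fourier_add_half_inv_index h one_pos)

lemma integral_char (a b : ℤ) :
    ∫ p : T2, char a b p ∂volume = if a = 0 ∧ b = 0 then 1 else 0 := by
  have : ∫ p : T2, char a b p ∂volume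
      = ∫ p : 𝕋 × 𝕋, (fun x => fourier a x) p.1 * (fun y => fourier b y) p.2
        ∂((volume : Measure 𝕋).prod volume) := by
    rw [← Measure.volume_eq_prod]; rfl
  rw [this, MeasureTheory.integral_prod_mul, integral_fourier1, integral_fourier1]
  rcases eq_or_ne a 0 with h|h <;> rcases eq_or_ne b 0 with h'|h' <;> simp [h, h']

lemma charLp_coeFn (m n : ℤ) : (charLp m n : T2 → ℂ) =ᵐ[volume] char m n :=
  ContinuousMap.coeFn_toLp _ _

lemma memLp_char (m n : ℤ) : MemLp (⇑(char m n)) ⊤ volume := by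
  apply memLp_top_of_bound (Continuous.aestronglyMeasurable (map_continuous _)) 1
  filter_upwards with p
  exact le_of_eq (norm_char m n p)

lemma memLp_mulCharFun (m n : ℤ) (g : L2) :
    MemLp (⇑(char m n) • (g : T2 → ℂ)) 2 volume :=
  (Lp.memLp g).smul (memLp_char m n)

/-- multiplication by the character `z₁^m z₂^n` as an operator on `L2`. -/
def mulChar (m n : ℤ) : L2 →L[ℂ] L2 := by
  refine LinearMap.mkContinuous
    { toFun := fun g => (memLp_mulCharFun m n g).toLp _
      map_add' := ?_, map_smul' := ?_ } 1 ?_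
  · intro g₁ g₂
    rw [← MemLp.toLp_add]
    apply MemLp.toLp_congr
    filter_upwards [Lp.coeFn_add g₁ g₂] with p hp
    simp only [Pi.mul_apply, Pi.smul_apply, smul_eq_mul, hp, Pi.add_apply, mul_add]
  · intro c g
    simp only [RingHom.id_apply]
    rw [← MemLp.toLp_const_smul]
    apply MemLp.toLp_congr
    filter_upwards [Lp.coeFn_smul c g] with p hp
    simp only [Pi.mul_apply, Pi.smul_apply, smul_eq_mul, hp]
    ring
  · intro g
    simp only [LinearMap.coe_mk, AddHom.coe_mk, one_mul]
    rw [Lp.norm_toLp, Lp.norm_def]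
    apply ENNReal.toReal_mono (Lp.eLpNorm_ne_top g)
    apply eLpNorm_mono_ae
    filter_upwards with p
    rw [Pi.smul_apply', smul_eq_mul, norm_mul, norm_char, one_mul]

lemma mulChar_coeFn (m n : ℤ) (g : L2) :
    (mulChar m n g : T2 → ℂ) =ᵐ[volume] fun p => char m n p * g p := by
  have := MemLp.coeFn_toLp (memLp_mulCharFun m n g)
  filter_upwards [this] with p hp
  simpa [show mulChar m n g = (memLp_mulCharFun m n g).toLp _ from rfl] using hp

lemma mulChar_mulChar (a b c d : ℤ) (g : L2) :
    mulChar a b (mulChar c d g) = mulChar (a+c) (b+d) g := by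
  apply Lp.ext
  filter_upwards [mulChar_coeFn a b (mulChar c d g), mulChar_coeFn c d g,
    mulChar_coeFn (a+c) (b+d) g] with p h1 h2 h3
  rw [h1, h2, h3, ← mul_assoc, char_mul]

lemma mulChar_zero_zero (g : L2) : mulChar 0 0 g = g := by
  apply Lp.ext
  filter_upwards [mulChar_coeFn 0 0 g] with p h1
  rw [h1]
  simp [char_apply]

lemma mulChar_charLp (a b m n : ℤ) :
    mulChar a b (charLp m n) = charLp (a+m) (b+n) := by
  apply Lp.ext
  filter_upwards [mulChar_coeFn a b (charLp m n), charLp_coeFn m n,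
    charLp_coeFn (a+m) (b+n)] with p h1 h2 h3
  rw [h1, h2, h3, char_mul]

local notation "⟪" x ", " y "⟫" => @inner ℂ _ _ x y

lemma fourierCoeff2_eq_inner (g : L2) (m n : ℤ) :
    fourierCoeff2 g m n = ⟪charLp m n, g⟫ := by
  rw [fourierCoeff2, MeasureTheory.L2.inner_def]
  apply integral_congr_ae
  filter_upwards [charLp_coeFn m n] with p hp
  rw [hp]
  simp [RCLike.inner_apply, mul_comm]

lemma inner_charLp_charLp (a b m n : ℤ) :
    ⟪charLp a b, charLp m n⟫ = if m = a ∧ n = b then 1 else 0 := by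
  rw [← fourierCoeff2_eq_inner, fourierCoeff2]
  have : ∀ p : T2, conj (char a b p) * char m n p = char (m-a) (n-b) p := by
    intro p
    rw [conj_char, char_mul]
    ring_nf
  have h2 : ∫ p : T2, conj (char a b p) * (charLp m n : T2 → ℂ) p ∂volume
      = ∫ p : T2, char (m-a) (n-b) p ∂volume := by
    apply integral_congr_ae
    filter_upwards [charLp_coeFn m n] with p hp
    rw [hp, this]
  rw [h2, integral_char]
  rcases eq_or_ne m a with h|h <;> rcases eq_or_ne n b with h'|h' <;>
    simp +contextual [h, h', sub_eq_zero, sub_ne_zero.mpr]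

lemma fourierCoeff2_mulChar (a b m n : ℤ) (g : L2) :
    fourierCoeff2 (mulChar a b g) m n = fourierCoeff2 g (m-a) (n-b) := by
  rw [fourierCoeff2, fourierCoeff2]
  apply integral_congr_ae
  filter_upwards [mulChar_coeFn a b g] with p hp
  rw [hp, conj_char, conj_char, ← mul_assoc, char_mul]
  ring_nf

lemma fourierCoeff2_charLp (a b m n : ℤ) :
    fourierCoeff2 (charLp a b) m n = if m = a ∧ n = b then 1 else 0 := by
  rw [fourierCoeff2_eq_inner, inner_charLp_charLp]
  simp [and_comm, eq_comm]

lemma inner_zero_of_mem_closureSpan {S : Set L2} {v u : L2}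
    (h : ∀ s ∈ S, ⟪v, s⟫ = 0)
    (hu : u ∈ (Submodule.span ℂ S).topologicalClosure) : ⟪v, u⟫ = 0 := by
  have hker : (Submodule.span ℂ S).topologicalClosure ≤ (innerSL ℂ v).ker := by
    apply Submodule.topologicalClosure_minimal
    · rw [Submodule.span_le]
      intro s hs
      simpa [LinearMap.mem_ker] using h s hs
    · exact ContinuousLinearMap.isClosed_ker _
  simpa [LinearMap.mem_ker] using hker hu

lemma mem_H2_orthogonal {u : L2} (h : ∀ m n : ℕ, fourierCoeff2 u m n = 0) : u ∈ H2ᗮ := by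
  intro v hv
  have : ⟪u, v⟫ = 0 := by
    apply inner_zero_of_mem_closureSpan (S := {f | ∃ m n : ℕ, f = charLp m n}) ?_ hv
    rintro s ⟨m, n, rfl⟩
    have := h m n
    rw [fourierCoeff2_eq_inner] at this
    rw [← inner_conj_symm, this, map_zero]
  rw [← inner_conj_symm, this, map_zero]

lemma H2_eq : H2 = (Submodule.span ℂ {f | ∃ m n : ℕ, f = charLp m n}).topologicalClosure := rfl

lemma charLp_mem_H2 (m n : ℕ) : charLp m n ∈ H2 :=
  (Submodule.span ℂ _).le_topologicalClosure (Submodule.subset_span ⟨m, n, rfl⟩)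

lemma clm_image_closureSpan (T : L2 →L[ℂ] L2) {S : Set L2} {u : L2}
    (hu : u ∈ (Submodule.span ℂ S).topologicalClosure) :
    T u ∈ (Submodule.span ℂ (T '' S)).topologicalClosure := by
  have h1 : u ∈ closure ((Submodule.span ℂ S : Submodule ℂ L2) : Set L2) := hu
  have h2 : T u ∈ closure (T '' ((Submodule.span ℂ S : Submodule ℂ L2) : Set L2)) :=
    image_closure_subset_closure_image T.continuous (Set.mem_image_of_mem T h1)
  have h3 : T '' ((Submodule.span ℂ S : Submodule ℂ L2) : Set L2)
      = ((Submodule.span ℂ (T '' S) : Submodule ℂ L2) : Set L2) := by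
    rw [show ⇑T = ⇑(T.toLinearMap) from rfl, ← Submodule.map_coe, Submodule.map_span]
  rw [h3] at h2
  exact h2

lemma mulChar_mem_H2 (a b : ℕ) {g : L2} (hg : g ∈ H2) : mulChar a b g ∈ H2 := by
  have h1 := clm_image_closureSpan (mulChar a b) hg
  refine Submodule.topologicalClosure_mono (Submodule.span_mono ?_) h1
  rintro _ ⟨_, ⟨m, n, rfl⟩, rfl⟩
  refine ⟨a + m, b + n, ?_⟩
  rw [mulChar_charLp]
  push_cast
  rfl

lemma P_eq {x y : L2} (hy : y ∈ H2) (horth : x - y ∈ H2ᗮ) : (P x : L2) = y :=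
  eq_starProjection_of_mem_orthogonal hy horth

lemma toLp_conj_a (h : L2) :
    MemLp.toLp ((fun p => starRingEnd ℂ ((char 1 0 p - char 0 1 p) / 2)) • (h : T2 → ℂ))
      ((Lp.memLp h).smul (r := 2) a19_mem.conj')
    = (2:ℂ)⁻¹ • (mulChar (-1) 0 h - mulChar 0 (-1) h) := by
  apply Lp.ext
  filter_upwards [MemLp.coeFn_toLp ((Lp.memLp h).smul (r := 2) a19_mem.conj'),
    Lp.coeFn_smul ((2:ℂ)⁻¹) (mulChar (-1) 0 h - mulChar 0 (-1) h),
    Lp.coeFn_sub (mulChar (-1) 0 h) (mulChar 0 (-1) h),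
    mulChar_coeFn (-1) 0 h, mulChar_coeFn 0 (-1) h] with p h0 h1 h2 h3 h4
  rw [h0, h1, Pi.smul_apply, h2, Pi.sub_apply, h3, h4]
  simp only [Pi.smul_apply', smul_eq_mul, map_div₀, map_sub]
  rw [conj_char, conj_char]
  push_cast
  have : (starRingEnd ℂ) 2 = 2 := by
    rw [show (2:ℂ) = ((2:ℝ):ℂ) by norm_num, Complex.conj_ofReal]
  rw [this]
  ring

lemma Toep_eq (h : L2) :
    Toep (fun p => starRingEnd ℂ ((char 1 0 p - char 0 1 p) / 2)) a19_mem.conj' h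
      = (P ((2:ℂ)⁻¹ • (mulChar (-1) 0 h - mulChar 0 (-1) h)) : L2) := by
  rw [Toep, toLp_conj_a]

def V0 : Submodule ℂ L2 := (Submodule.span ℂ {f : L2 | f = charLp 0 0}).topologicalClosure
def V1 : Submodule ℂ L2 :=
  (Submodule.span ℂ {f : L2 | ∃ m : ℕ, f = charLp (m+1) 0}).topologicalClosure
def V2 : Submodule ℂ L2 :=
  (Submodule.span ℂ {f : L2 | ∃ n : ℕ, f = charLp 0 (n+1)}).topologicalClosure
def V3 : Submodule ℂ L2 :=
  (Submodule.span ℂ {f : L2 | ∃ m n : ℕ, f = charLp (m+1) (n+1)}).topologicalClosure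
/-- functions of `z₁` alone -/
def W1 : Submodule ℂ L2 :=
  (Submodule.span ℂ {f : L2 | ∃ m : ℕ, f = charLp m 0}).topologicalClosure
def W2 : Submodule ℂ L2 :=
  (Submodule.span ℂ {f : L2 | ∃ n : ℕ, f = charLp 0 n}).topologicalClosure

instance : CompleteSpace V0 := (Submodule.isClosed_topologicalClosure _).completeSpace_coe
instance : CompleteSpace V1 := (Submodule.isClosed_topologicalClosure _).completeSpace_coe
instance : CompleteSpace V2 := (Submodule.isClosed_topologicalClosure _).completeSpace_coe
instance : CompleteSpace V3 := (Submodule.isClosed_topologicalClosure _).completeSpace_coe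

lemma V0_le_H2 : V0 ≤ H2 := Submodule.topologicalClosure_mono (Submodule.span_mono (by
  rintro _ rfl; exact ⟨0, 0, rfl⟩))
lemma V1_le_H2 : V1 ≤ H2 := Submodule.topologicalClosure_mono (Submodule.span_mono (by
  rintro _ ⟨m, rfl⟩; exact ⟨m+1, 0, by push_cast; rfl⟩))
lemma V2_le_H2 : V2 ≤ H2 := Submodule.topologicalClosure_mono (Submodule.span_mono (by
  rintro _ ⟨n, rfl⟩; exact ⟨0, n+1, by push_cast; rfl⟩))
lemma V3_le_H2 : V3 ≤ H2 := Submodule.topologicalClosure_mono (Submodule.span_mono (by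
  rintro _ ⟨m, n, rfl⟩; exact ⟨m+1, n+1, by push_cast; rfl⟩))
lemma W1_le_H2 : W1 ≤ H2 := Submodule.topologicalClosure_mono (Submodule.span_mono (by
  rintro _ ⟨m, rfl⟩; exact ⟨m, 0, rfl⟩))
lemma W2_le_H2 : W2 ≤ H2 := Submodule.topologicalClosure_mono (Submodule.span_mono (by
  rintro _ ⟨n, rfl⟩; exact ⟨0, n, rfl⟩))

lemma charLp_orth_closureSpan {S : Set L2} {m n : ℤ}
    (h : ∀ s ∈ S, ⟪charLp m n, s⟫ = 0) :
    charLp m n ∈ ((Submodule.span ℂ S).topologicalClosure)ᗮ := by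
  rw [Submodule.mem_orthogonal']
  intro u hu
  exact inner_zero_of_mem_closureSpan h hu

lemma charLp_orth_V0 {m n : ℤ} (h : ¬(m = 0 ∧ n = 0)) : charLp m n ∈ V0ᗮ := by
  apply charLp_orth_closureSpan
  rintro _ rfl
  rw [inner_charLp_charLp]
  simp only [ite_eq_right_iff, one_ne_zero]
  rintro ⟨rfl, rfl⟩; exact h ⟨rfl, rfl⟩

lemma charLp_orth_V1 {m n : ℤ} (h : n ≠ 0 ∨ m ≤ 0) : charLp m n ∈ V1ᗮ := by
  apply charLp_orth_closureSpan
  rintro _ ⟨k, rfl⟩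
  rw [inner_charLp_charLp]
  simp only [ite_eq_right_iff, one_ne_zero]
  rintro ⟨rfl, rfl⟩
  rcases h with h|h
  · exact h rfl
  · omega

lemma charLp_orth_V2 {m n : ℤ} (h : m ≠ 0 ∨ n ≤ 0) : charLp m n ∈ V2ᗮ := by
  apply charLp_orth_closureSpan
  rintro _ ⟨k, rfl⟩
  rw [inner_charLp_charLp]
  simp only [ite_eq_right_iff, one_ne_zero]
  rintro ⟨rfl, rfl⟩
  rcases h with h|h
  · exact h rfl
  · omega

lemma charLp_orth_V3 {m n : ℤ} (h : m ≤ 0 ∨ n ≤ 0) : charLp m n ∈ V3ᗮ := by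
  apply charLp_orth_closureSpan
  rintro _ ⟨k, l, rfl⟩
  rw [inner_charLp_charLp]
  simp only [ite_eq_right_iff, one_ne_zero]
  rintro ⟨rfl, rfl⟩
  omega

lemma inner_orthProj_of_mem {V : Submodule ℂ L2} [CompleteSpace V] {c : L2}
    (hc : c ∈ V) (x : L2) :
    ⟪c, (orthogonalProjection V x : L2)⟫ = ⟪c, x⟫ := by
  rw [show (orthogonalProjection V x : L2) = V.starProjection x from rfl,
    ← inner_starProjection_left_eq_right, starProjection_eq_self_iff.mpr hc]

lemma inner_orthProj_of_orth {V : Submodule ℂ L2} [CompleteSpace V] {c : L2}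
    (hc : c ∈ Vᗮ) (x : L2) :
    ⟪c, (orthogonalProjection V x : L2)⟫ = 0 := by
  rw [show (orthogonalProjection V x : L2) = V.starProjection x from rfl,
    ← inner_starProjection_left_eq_right, starProjection_apply,
    orthogonalProjectionOnto_apply_of_mem_orthogonal hc]
  simp

lemma charLp_mem_V1 (k : ℕ) : charLp (k+1) 0 ∈ V1 :=
  (Submodule.span ℂ _).le_topologicalClosure (Submodule.subset_span ⟨k, rfl⟩)
lemma charLp_mem_V2 (k : ℕ) : charLp 0 (k+1) ∈ V2 :=
  (Submodule.span ℂ _).le_topologicalClosure (Submodule.subset_span ⟨k, rfl⟩)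
lemma charLp_mem_V3 (k l : ℕ) : charLp (k+1) (l+1) ∈ V3 :=
  (Submodule.span ℂ _).le_topologicalClosure (Submodule.subset_span ⟨k, l, rfl⟩)
lemma charLp_mem_V0 : charLp 0 0 ∈ V0 :=
  (Submodule.span ℂ _).le_topologicalClosure (Submodule.subset_span rfl)

lemma H2_decomp {h : L2} (hh : h ∈ H2) :
    h = (orthogonalProjection V0 h : L2) + (orthogonalProjection V1 h : L2)
      + (orthogonalProjection V2 h : L2) + (orthogonalProjection V3 h : L2) := by
  set y := (orthogonalProjection V0 h : L2) + (orthogonalProjection V1 h : L2)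
      + (orthogonalProjection V2 h : L2) + (orthogonalProjection V3 h : L2) with hy
  have hyH2 : y ∈ H2 := by
    refine Submodule.add_mem _ (Submodule.add_mem _ (Submodule.add_mem _ ?_ ?_) ?_) ?_
    · exact V0_le_H2 (orthogonalProjection V0 h).2
    · exact V1_le_H2 (orthogonalProjection V1 h).2
    · exact V2_le_H2 (orthogonalProjection V2 h).2
    · exact V3_le_H2 (orthogonalProjection V3 h).2
  have hdiff : h - y ∈ H2 := Submodule.sub_mem _ hh hyH2
  have horth : h - y ∈ H2ᗮ := by
    apply mem_H2_orthogonal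
    intro m n
    rw [fourierCoeff2_eq_inner, inner_sub_right, hy, inner_add_right, inner_add_right,
      inner_add_right]
    rcases Nat.eq_zero_or_pos m with hm|hm <;> rcases Nat.eq_zero_or_pos n with hn|hn
    · subst hm; subst hn
      simp only [Nat.cast_zero]
      rw [inner_orthProj_of_mem charLp_mem_V0,
        inner_orthProj_of_orth (charLp_orth_V1 (Or.inr le_rfl)),
        inner_orthProj_of_orth (charLp_orth_V2 (Or.inr le_rfl)),
        inner_orthProj_of_orth (charLp_orth_V3 (Or.inl le_rfl))]
      ring
    · subst hm
      obtain ⟨s, rfl⟩ : ∃ s : ℕ, n = s + 1 := ⟨n - 1, by omega⟩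
      simp only [Nat.cast_zero, Nat.cast_add, Nat.cast_one]
      rw [inner_orthProj_of_mem (charLp_mem_V2 s),
        inner_orthProj_of_orth (charLp_orth_V0 (by omega)),
        inner_orthProj_of_orth (charLp_orth_V1 (Or.inl (by omega))),
        inner_orthProj_of_orth (charLp_orth_V3 (Or.inl le_rfl))]
      ring
    · subst hn
      obtain ⟨r, rfl⟩ : ∃ r : ℕ, m = r + 1 := ⟨m - 1, by omega⟩
      simp only [Nat.cast_zero, Nat.cast_add, Nat.cast_one]
      rw [inner_orthProj_of_mem (charLp_mem_V1 r),
        inner_orthProj_of_orth (charLp_orth_V0 (by omega)),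
        inner_orthProj_of_orth (charLp_orth_V2 (Or.inl (by omega))),
        inner_orthProj_of_orth (charLp_orth_V3 (Or.inr le_rfl))]
      ring
    · obtain ⟨r, rfl⟩ : ∃ r : ℕ, m = r + 1 := ⟨m - 1, by omega⟩
      obtain ⟨s, rfl⟩ : ∃ s : ℕ, n = s + 1 := ⟨n - 1, by omega⟩
      simp only [Nat.cast_add, Nat.cast_one]
      rw [inner_orthProj_of_mem (charLp_mem_V3 r s),
        inner_orthProj_of_orth (charLp_orth_V0 (by omega)),
        inner_orthProj_of_orth (charLp_orth_V1 (Or.inl (by omega))),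
        inner_orthProj_of_orth (charLp_orth_V2 (Or.inl (by omega)))]
      ring
  have : h - y = 0 := by
    have h0 := horth (h - y) hdiff
    rwa [inner_self_eq_zero] at h0
  rw [← sub_eq_zero]; exact this

lemma fourierCoeff2_smul (c : ℂ) (g : L2) (m n : ℤ) :
    fourierCoeff2 (c • g) m n = c * fourierCoeff2 g m n := by
  simp [fourierCoeff2_eq_inner, inner_smul_right]

lemma fourierCoeff2_sub (g₁ g₂ : L2) (m n : ℤ) :
    fourierCoeff2 (g₁ - g₂) m n = fourierCoeff2 g₁ m n - fourierCoeff2 g₂ m n := by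
  simp [fourierCoeff2_eq_inner, inner_sub_right]

lemma fourierCoeff2_add (g₁ g₂ : L2) (m n : ℤ) :
    fourierCoeff2 (g₁ + g₂) m n = fourierCoeff2 g₁ m n + fourierCoeff2 g₂ m n := by
  simp [fourierCoeff2_eq_inner, inner_add_right]

lemma fourierCoeff2_neg (g : L2) (m n : ℤ) :
    fourierCoeff2 (-g) m n = - fourierCoeff2 g m n := by
  simp [fourierCoeff2_eq_inner, inner_neg_right]

lemma fourierCoeff2_zero_of_orth {V : Submodule ℂ L2} {g : L2} (hg : g ∈ V) {m n : ℤ}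
    (hc : charLp m n ∈ Vᗮ) : fourierCoeff2 g m n = 0 := by
  rw [fourierCoeff2_eq_inner]
  exact (Submodule.mem_orthogonal' _ _).mp hc g hg

lemma fourierCoeff2_zero_of_mem_W1 {g : L2} (hg : g ∈ W1) {m n : ℤ} (hn : n ≠ 0) :
    fourierCoeff2 g m n = 0 := by
  rw [fourierCoeff2_eq_inner]
  apply inner_zero_of_mem_closureSpan ?_ hg
  rintro _ ⟨k, rfl⟩
  rw [inner_charLp_charLp]
  simp only [ite_eq_right_iff, one_ne_zero]
  rintro ⟨rfl, rfl⟩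
  exact hn rfl

lemma fourierCoeff2_zero_of_mem_W2 {g : L2} (hg : g ∈ W2) {m n : ℤ} (hm : m ≠ 0) :
    fourierCoeff2 g m n = 0 := by
  rw [fourierCoeff2_eq_inner]
  apply inner_zero_of_mem_closureSpan ?_ hg
  rintro _ ⟨k, rfl⟩
  rw [inner_charLp_charLp]
  simp only [ite_eq_right_iff, one_ne_zero]
  rintro ⟨rfl, rfl⟩
  exact hm rfl

lemma mulChar_V1_mem_W1 {g : L2} (hg : g ∈ V1) : mulChar (-1) 0 g ∈ W1 := by
  have h1 := clm_image_closureSpan (mulChar (-1) 0) hg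
  refine Submodule.topologicalClosure_mono (Submodule.span_mono ?_) h1
  rintro _ ⟨_, ⟨k, rfl⟩, rfl⟩
  refine ⟨k, ?_⟩
  rw [mulChar_charLp]
  norm_num

lemma mulChar_V2_mem_W2 {g : L2} (hg : g ∈ V2) : mulChar 0 (-1) g ∈ W2 := by
  have h1 := clm_image_closureSpan (mulChar 0 (-1)) hg
  refine Submodule.topologicalClosure_mono (Submodule.span_mono ?_) h1
  rintro _ ⟨_, ⟨k, rfl⟩, rfl⟩
  refine ⟨k, ?_⟩
  rw [mulChar_charLp]
  norm_num

lemma mulChar_V3_mem_H2 {g : L2} (hg : g ∈ V3) : mulChar (-1) (-1) g ∈ H2 := by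
  have h1 := clm_image_closureSpan (mulChar (-1) (-1)) hg
  refine Submodule.topologicalClosure_mono (Submodule.span_mono ?_) h1
  rintro _ ⟨_, ⟨k, l, rfl⟩, rfl⟩
  refine ⟨k, l, ?_⟩
  rw [mulChar_charLp]
  norm_num

lemma mulChar_mem_H2' {a b : ℤ} (ha : 0 ≤ a) (hb : 0 ≤ b) {g : L2} (hg : g ∈ H2) :
    mulChar a b g ∈ H2 := by
  obtain ⟨a', rfl⟩ := Int.eq_ofNat_of_zero_le ha
  obtain ⟨b', rfl⟩ := Int.eq_ofNat_of_zero_le hb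
  exact mulChar_mem_H2 a' b' hg

/-- Theorem 5.3 (first part): for `a(z) = (z₁−z₂)/2`, a function `f ∈ H²(𝔻²)` belongs
to `M(ā) = T_ā H²(𝔻²)` if and only if `f(z) = f₁(z₁) + f₂(z₂) + (z₁−z₂)f₃(z)` for some
`f₁, f₂ ∈ H²(𝔻)` (elements of `H²(𝔻²)` depending only on `z₁`, resp. `z₂`) and
`f₃ ∈ H²(𝔻²)`. -/
theorem mem_mate_range_iff_z1_minus_z2 (f : L2) (hf : f ∈ H2) :
    (∃ h ∈ H2,
        Toep (fun p => starRingEnd ℂ ((char 1 0 p - char 0 1 p) / 2)) a19_mem.conj' h = f) ↔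
      ∃ f₁ f₂ f₃ : L2, f₁ ∈ H2 ∧ f₂ ∈ H2 ∧ f₃ ∈ H2 ∧
        (∀ m n : ℤ, n ≠ 0 → fourierCoeff2 f₁ m n = 0) ∧
        (∀ m n : ℤ, m ≠ 0 → fourierCoeff2 f₂ m n = 0) ∧
        (f : T2 → ℂ) =ᵐ[volume] fun p =>
          f₁ p + f₂ p + (fourier 1 p.1 - fourier 1 p.2) * f₃ p := by
  constructor
  · rintro ⟨h, hh, hToep⟩
    set u0 : L2 := (orthogonalProjection V0 h : L2) with hu0def
    set u1 : L2 := (orthogonalProjection V1 h : L2) with hu1def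
    set u2 : L2 := (orthogonalProjection V2 h : L2) with hu2def
    set u3 : L2 := (orthogonalProjection V3 h : L2) with hu3def
    have hu0 : u0 ∈ V0 := (orthogonalProjection V0 h).2
    have hu1 : u1 ∈ V1 := (orthogonalProjection V1 h).2
    have hu2 : u2 ∈ V2 := (orthogonalProjection V2 h).2
    have hu3 : u3 ∈ V3 := (orthogonalProjection V3 h).2
    have hdec : h = u0 + u1 + u2 + u3 := H2_decomp hh
    set f₁ : L2 := (2:ℂ)⁻¹ • mulChar (-1) 0 u1 with hf₁def
    set f₂ : L2 := -(2:ℂ)⁻¹ • mulChar 0 (-1) u2 with hf₂def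
    set f₃ : L2 := -(2:ℂ)⁻¹ • mulChar (-1) (-1) u3 with hf₃def
    have hf₁W : mulChar (-1) 0 u1 ∈ W1 := mulChar_V1_mem_W1 hu1
    have hf₂W : mulChar 0 (-1) u2 ∈ W2 := mulChar_V2_mem_W2 hu2
    refine ⟨f₁, f₂, f₃, ?_, ?_, ?_, ?_, ?_, ?_⟩
    · exact Submodule.smul_mem _ _ (W1_le_H2 hf₁W)
    · exact Submodule.smul_mem _ _ (W2_le_H2 hf₂W)
    · exact Submodule.smul_mem _ _ (mulChar_V3_mem_H2 hu3)
    · intro m n hn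
      rw [hf₁def, fourierCoeff2_smul, fourierCoeff2_zero_of_mem_W1 hf₁W hn, mul_zero]
    · intro m n hm
      rw [hf₂def, fourierCoeff2_smul, fourierCoeff2_zero_of_mem_W2 hf₂W hm, mul_zero]
    · set y : L2 := f₁ + f₂ + (mulChar 1 0 f₃ - mulChar 0 1 f₃) with hydef
      have hyH2 : y ∈ H2 := by
        refine Submodule.add_mem _ (Submodule.add_mem _ ?_ ?_) (Submodule.sub_mem _ ?_ ?_)
        · exact Submodule.smul_mem _ _ (W1_le_H2 hf₁W)
        · exact Submodule.smul_mem _ _ (W2_le_H2 hf₂W)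
        · exact mulChar_mem_H2' (by norm_num) (by norm_num)
            (Submodule.smul_mem _ _ (mulChar_V3_mem_H2 hu3))
        · exact mulChar_mem_H2' (by norm_num) (by norm_num)
            (Submodule.smul_mem _ _ (mulChar_V3_mem_H2 hu3))
      have hx : (2:ℂ)⁻¹ • (mulChar (-1) 0 h - mulChar 0 (-1) h) - y
          = (2:ℂ)⁻¹ • (mulChar (-1) 0 u0 + mulChar (-1) 0 u2
              - mulChar 0 (-1) u0 - mulChar 0 (-1) u1) := by
        conv_lhs => rw [hdec]
        rw [hydef, hf₁def, hf₂def, hf₃def]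
        simp only [map_add, _root_.map_smul, map_sub, map_neg, mulChar_mulChar]
        norm_num [mulChar_zero_zero]
        module
      have horth : (2:ℂ)⁻¹ • (mulChar (-1) 0 h - mulChar 0 (-1) h) - y ∈ H2ᗮ := by
        rw [hx]
        apply mem_H2_orthogonal
        intro m n
        rw [fourierCoeff2_smul, fourierCoeff2_sub, fourierCoeff2_sub, fourierCoeff2_add,
          fourierCoeff2_mulChar, fourierCoeff2_mulChar, fourierCoeff2_mulChar,
          fourierCoeff2_mulChar,
          fourierCoeff2_zero_of_orth hu0 (charLp_orth_V0 (by omega)),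
          fourierCoeff2_zero_of_orth hu2 (charLp_orth_V2 (Or.inl (by omega))),
          fourierCoeff2_zero_of_orth hu0 (charLp_orth_V0 (by omega)),
          fourierCoeff2_zero_of_orth hu1 (charLp_orth_V1 (Or.inl (by omega)))]
        ring
      have hfy : f = y := by
        rw [← hToep, Toep_eq]
        exact P_eq hyH2 horth
      rw [hfy]
      filter_upwards [Lp.coeFn_add (f₁ + f₂) (mulChar 1 0 f₃ - mulChar 0 1 f₃),
        Lp.coeFn_add f₁ f₂, Lp.coeFn_sub (mulChar 1 0 f₃) (mulChar 0 1 f₃),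
        mulChar_coeFn 1 0 f₃, mulChar_coeFn 0 1 f₃] with p e1 e2 e3 e4 e5
      rw [hydef, e1, Pi.add_apply, e2, Pi.add_apply, e3, Pi.sub_apply, e4, e5,
        char_apply, char_apply]
      simp only [fourier_zero, one_mul, mul_one]
      ring
  · rintro ⟨f₁, f₂, f₃, hm1, hm2, hm3, hv1, hv2, hae⟩
    set h : L2 := (2:ℂ) • (mulChar 1 0 f₁ - mulChar 0 1 f₂ - mulChar 1 1 f₃) with hhdef
    have hhH2 : h ∈ H2 := by
      refine Submodule.smul_mem _ _ (Submodule.sub_mem _ (Submodule.sub_mem _ ?_ ?_) ?_)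
      · exact mulChar_mem_H2' (by norm_num) (by norm_num) hm1
      · exact mulChar_mem_H2' (by norm_num) (by norm_num) hm2
      · exact mulChar_mem_H2' (by norm_num) (by norm_num) hm3
    refine ⟨h, hhH2, ?_⟩
    have hF : f = f₁ + f₂ + (mulChar 1 0 f₃ - mulChar 0 1 f₃) := by
      apply Lp.ext
      filter_upwards [hae, Lp.coeFn_add (f₁ + f₂) (mulChar 1 0 f₃ - mulChar 0 1 f₃),
        Lp.coeFn_add f₁ f₂, Lp.coeFn_sub (mulChar 1 0 f₃) (mulChar 0 1 f₃),
        mulChar_coeFn 1 0 f₃, mulChar_coeFn 0 1 f₃] with p e0 e1 e2 e3 e4 e5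
      rw [e0, e1, Pi.add_apply, e2, Pi.add_apply, e3, Pi.sub_apply, e4, e5,
        char_apply, char_apply]
      simp only [fourier_zero, one_mul, mul_one]
      ring
    rw [Toep_eq]
    apply P_eq hf
    have hx : (2:ℂ)⁻¹ • (mulChar (-1) 0 h - mulChar 0 (-1) h) - f
        = - mulChar (-1) 1 f₂ - mulChar 1 (-1) f₁ := by
      rw [hF, hhdef]
      simp only [_root_.map_smul, map_sub, mulChar_mulChar]
      norm_num [mulChar_zero_zero]
      module
    rw [hx]
    apply mem_H2_orthogonal
    intro m n
    rw [fourierCoeff2_sub, fourierCoeff2_neg, fourierCoeff2_mulChar, fourierCoeff2_mulChar,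
      hv2 _ _ (by omega), hv1 _ _ (by omega)]
    ring
end
end
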